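/- Let ε ∈ {1, -1}. If n and m are positive integers with n < m and a(n) - ε·2^n = a(m) - ε·2^m, then 2^n ≤ 8·m (equivalently, n ≤ 3 + log(m)/log(2)). -/

import Mathlib

/-- The sequence `a` defined by `a 0 = 1`, `a 1 = -1`,
`a n = -3 * a (n-1) - 4 * a (n-2)` for `n ≥ 2`. -/
def a : ℕ → ℤ
  | 0 => 1
  | 1 => -1
  | n + 2 => -3 * a (n + 1) - 4 * a n

private lemma hensel (j : ℕ) : ∃ r : ℤ, r % 32 = 25 ∧ (2:ℤ)^(j+5) ∣ (r^2 + 3*r + 4) := by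
  induction j with
  | zero => exact ⟨25, by norm_num, by norm_num⟩
  | succ j ih =>
    obtain ⟨r, h32, c, hc⟩ := ih
    rcases Int.even_or_odd c with ⟨c', rfl⟩ | ⟨c', rfl⟩
    · exact ⟨r, h32, c', by rw [hc]; ring⟩
    · refine ⟨r + 2^(j+5), ?_, ⟨c' + r + 2 + 2^(j+4), ?_⟩⟩
      · have h2 : (2:ℤ)^(j+5) = 32 * 2^j := by ring
        rw [h2, Int.add_mul_emod_self_left]
        exact h32
      · linear_combination hc

private lemma pow_mod8 (r : ℤ) (h : r % 8 = 1) (c : ℕ) : r ^ c % 8 = 1 := by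
  induction c with
  | zero => norm_num
  | succ c ih => rw [pow_succ, Int.mul_emod, ih, h]; norm_num

private lemma geom_odd (r : ℤ) (hr : Odd r) (e : ℕ) (he : Odd e) :
    Odd (∑ i ∈ Finset.range e, r ^ i) := by
  have key : ∀ f : ℕ, (∑ i ∈ Finset.range f, r ^ i) % 2 = (f : ℤ) % 2 := by
    intro f
    induction f with
    | zero => simp
    | succ f ih =>
      rw [Finset.sum_range_succ]
      have h1 : r ^ f % 2 = 1 := Int.odd_iff.mp hr.pow
      push_cast
      omega
  rw [Int.odd_iff, key e]
  have h2 := Nat.odd_iff.mp he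
  omega

private lemma lte_lemma (r : ℤ) (h32 : r % 32 = 25) :
    ∀ (k e : ℕ), Odd e → ∃ o : ℤ, Odd o ∧ r ^ (2^k * e) - 1 = 2^(k+3) * o := by
  have hro : Odd r := by rw [Int.odd_iff]; omega
  intro k
  induction k with
  | zero =>
    intro e he
    have hgeom : Odd (∑ i ∈ Finset.range e, r ^ i) := geom_odd r hro e he
    obtain ⟨q, hrq⟩ : ∃ q : ℤ, r = 32*q + 25 := ⟨r/32, by omega⟩
    refine ⟨(4*q+3) * ∑ i ∈ Finset.range e, r ^ i, Odd.mul ⟨2*q+1, by ring⟩ hgeom, ?_⟩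
    have hg := geom_sum_mul r e
    simp only [pow_zero, one_mul]
    rw [← hg, hrq]
    ring
  | succ k ih =>
    intro e he
    obtain ⟨o, ho, hco⟩ := ih e he
    have h1 : r ^ (2^k*e) % 8 = 1 := pow_mod8 r (by omega) (2^k*e)
    obtain ⟨t, ht⟩ : ∃ t : ℤ, r^(2^k*e) = 8*t + 1 := ⟨(r^(2^k*e) - 1)/8, by omega⟩
    refine ⟨o * (4*t+1), ho.mul ⟨2*t, by ring⟩, ?_⟩
    have hpw : 2^(k+1) * e = (2^k*e) * 2 := by ring
    rw [hpw, pow_mul]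
    linear_combination (r^(2^k*e) + 1) * hco + 2^(k+3) * o * ht

private def D (r : ℤ) : ℕ → ℤ :=
  fun n => (2*r+3) * (2 * a n) - ((2*r+4) * r^n + (2*r+2) * (-3-r)^n)

private lemma keylemma (r M : ℤ) (hf : M ∣ (r^2 + 3*r + 4)) : ∀ n : ℕ, M ∣ D r n := by
  have H : ∀ n : ℕ, M ∣ D r n ∧ M ∣ D r (n+1) := by
    intro n
    induction n with
    | zero =>
      constructor
      · have h0 : D r 0 = 0 := by
          simp only [D]
          rw [show a 0 = 1 from rfl]
          ring
        rw [h0]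
        exact dvd_zero M
      · have h1 : D r 1 = 0 := by
          simp only [D]
          rw [show a 1 = -1 from rfl]
          ring
        rw [h1]
        exact dvd_zero M
    | succ n ih =>
      refine ⟨ih.2, ?_⟩
      have hrec : D r (n+2) = -3 * D r (n+1) - 4 * D r n
          - (r^2+3*r+4) * ((2*r+4) * r^n + (2*r+2)*(-3-r)^n) := by
        simp only [D]
        rw [show a (n+2) = -3 * a (n+1) - 4 * a n from rfl]
        ring
      rw [hrec]
      exact dvd_sub (dvd_sub (ih.2.mul_left _) (ih.1.mul_left _)) (hf.mul_right _)
  exact fun n => (H n).1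

/-- If `ε = ±1` and `a n - ε·2^n = a m - ε·2^m` with `0 < n < m`,
then `2^n ≤ 8·m` (i.e. `n ≤ 3 + log m / log 2`). -/
theorem two_pow_n_le (ε : ℤ) (hε : ε = 1 ∨ ε = -1) (n m : ℕ) (hn : 0 < n) (hnm : n < m)
    (h : a n - ε * 2 ^ n = a m - ε * 2 ^ m) :
    (2 : ℤ) ^ n ≤ 8 * m := by
  by_contra hcon
  push_neg at hcon
  obtain ⟨d, hmnd⟩ : ∃ d : ℕ, m = n + d := ⟨m - n, by omega⟩
  have hd0 : d ≠ 0 := by omega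
  obtain ⟨k, e, he2, hde⟩ := Nat.exists_eq_pow_mul_and_not_dvd hd0 2 (by norm_num)
  have he : Odd e := Nat.odd_iff.mpr (by omega)
  have h2kd : 2^k ≤ d := by
    rw [hde]
    exact Nat.le_mul_of_pos_right _ (by omega)
  have hdm : d ≤ m := by omega
  have hkm : k ≤ m := by
    have := Nat.lt_two_pow_self (n := k)
    omega
  have hnk : k + 4 ≤ n := by
    by_contra hh
    push_neg at hh
    have c0 : (2:ℤ)^n ≤ 2^(k+3) := pow_le_pow_right₀ (by norm_num) (by omega)
    have c1 : (2:ℤ)^k ≤ (m:ℤ) := by exact_mod_cast (h2kd.trans hdm)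
    have c2 : (2:ℤ)^(k+3) = 8 * 2^k := by ring
    linarith
  obtain ⟨r, h32, hf⟩ := hensel (m + 5)
  have hro : Odd r := by rw [Int.odd_iff]; omega
  obtain ⟨q, hrq⟩ : ∃ q : ℤ, r = 32*q + 25 := ⟨r/32, by omega⟩
  obtain ⟨o, ho, hlte⟩ := lte_lemma r h32 k e he
  have hlte' : r^d - 1 = 2^(k+3) * o := by rw [hde]; exact hlte
  have hrd : r^d = 2^(k+3) * o + 1 := by linarith
  have hrpow : r^m = r^n * r^d := by rw [hmnd, pow_add]
  have hppow : (-3-r)^m = (-3-r)^n * (-3-r)^d := by rw [hmnd, pow_add]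
  have hpm : (-3-r)^n = 2^(2*n) * (-8*q-7)^n := by
    rw [show (-3-r : ℤ) = 4 * (-8*q-7) by rw [hrq]; ring, mul_pow,
       show ((4:ℤ) = 2^2) by norm_num, ← pow_mul]
  have hX : a m - a n = ε*2^m - ε*2^n := by linarith
  have hDm : D r m - D r n
      = (2*r+3)*(2*(a m - a n)) - 2^(k+4)*((r+2) * r^n * o)
        - (2*r+2)*((-3-r)^n * ((-3-r)^d - 1)) := by
    simp only [D]
    rw [hrpow, hppow, hrd]
    ring
  have h1 := keylemma r _ hf m
  have h2 := keylemma r _ hf n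
  have e3 : (2:ℤ)^(k+5) ∣ D r m - D r n :=
    dvd_trans (pow_dvd_pow 2 (by omega)) (dvd_sub h1 h2)
  have e1 : (2:ℤ)^(k+5) ∣ (2*r+3)*(2*(a m - a n)) := by
    have heq : (2*r+3)*(2*(a m - a n)) = 2^(n+1) * ((2*r+3)*(ε*(2^d - 1))) := by
      rw [hX, hmnd, pow_add]; ring
    rw [heq]
    exact (pow_dvd_pow 2 (by omega)).mul_right _
  have e2 : (2:ℤ)^(k+5) ∣ (2*r+2)*((-3-r)^n * ((-3-r)^d - 1)) := by
    rw [hpm]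
    have heq : (2*r+2)*(2^(2*n) * (-8*q-7)^n * ((-3-r)^d - 1))
        = 2^(2*n) * ((2*r+2)*((-8*q-7)^n * ((-3-r)^d - 1))) := by ring
    rw [heq]
    exact (pow_dvd_pow 2 (by omega)).mul_right _
  have e4 : (2:ℤ)^(k+5) ∣ 2^(k+4) * ((r+2) * r^n * o) := by
    have heq : 2^(k+4)*((r+2) * r^n * o)
        = (2*r+3)*(2*(a m - a n)) - (2*r+2)*((-3-r)^n * ((-3-r)^d - 1))
          - (D r m - D r n) := by
      linarith [hDm]
    rw [heq]
    exact dvd_sub (dvd_sub e1 e2) e3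
  have e5 : (2:ℤ) ∣ (r+2) * r^n * o := by
    rw [show ((2:ℤ)^(k+5)) = 2^(k+4) * 2 by ring] at e4
    exact (mul_dvd_mul_iff_left (by positivity : ((2:ℤ)^(k+4)) ≠ 0)).mp e4
  have hodd : Odd ((r+2) * r^n * o) :=
    ((by rw [Int.odd_iff]; omega : Odd (r+2)).mul hro.pow).mul ho
  rw [Int.odd_iff] at hodd
  omega
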